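/- The equation x³ − x·y² + y³ = 1 has exactly the five integer solutions (1, 1), (1, 0), (0, 1), (−1, 1), and (4, −3). -/

import Mathlib

set_option maxRecDepth 4000

namespace DeloneAux

/-- The ring `ℤ[θ]`, `θ³ = θ - 1`, as explicit triples `a + bθ + cθ²`. -/
structure R3 where
  a : ℤ
  b : ℤ
  c : ℤ
deriving DecidableEq

namespace R3

@[ext] theorem ext' {u v : R3} (ha : u.a = v.a) (hb : u.b = v.b) (hc : u.c = v.c) : u = v := by
  cases u; cases v; simp_all

instance : Zero R3 := ⟨⟨0,0,0⟩⟩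
instance : One R3 := ⟨⟨1,0,0⟩⟩
instance : Add R3 := ⟨fun u v => ⟨u.a+v.a, u.b+v.b, u.c+v.c⟩⟩
instance : Neg R3 := ⟨fun u => ⟨-u.a, -u.b, -u.c⟩⟩
instance : Mul R3 :=
  ⟨fun u v => ⟨u.a*v.a - u.b*v.c - u.c*v.b,
               u.a*v.b + u.b*v.a + u.b*v.c + u.c*v.b - u.c*v.c,
               u.a*v.c + u.b*v.b + u.c*v.a + u.c*v.c⟩⟩
instance : NatCast R3 := ⟨fun n => ⟨(n : ℤ), 0, 0⟩⟩
instance : IntCast R3 := ⟨fun m => ⟨m, 0, 0⟩⟩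

theorem zero_def : (0 : R3) = ⟨0,0,0⟩ := rfl
theorem one_def : (1 : R3) = ⟨1,0,0⟩ := rfl
theorem add_def (u v : R3) : u + v = ⟨u.a+v.a, u.b+v.b, u.c+v.c⟩ := rfl
theorem neg_def (u : R3) : -u = ⟨-u.a, -u.b, -u.c⟩ := rfl
theorem mul_def (u v : R3) :
    u * v = ⟨u.a*v.a - u.b*v.c - u.c*v.b,
             u.a*v.b + u.b*v.a + u.b*v.c + u.c*v.b - u.c*v.c,
             u.a*v.c + u.b*v.b + u.c*v.a + u.c*v.c⟩ := rfl
theorem natCast_def (n : ℕ) : ((n : ℕ) : R3) = ⟨(n : ℤ), 0, 0⟩ := rfl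
theorem intCast_def (m : ℤ) : ((m : ℤ) : R3) = ⟨m, 0, 0⟩ := rfl

instance : CommRing R3 where
  add_assoc u v w := by ext <;> simp only [add_def] <;> ring
  zero_add u := by ext <;> simp only [add_def, zero_def] <;> ring
  add_zero u := by ext <;> simp only [add_def, zero_def] <;> ring
  add_comm u v := by ext <;> simp only [add_def] <;> ring
  neg_add_cancel u := by ext <;> simp only [add_def, neg_def, zero_def] <;> ring
  mul_assoc u v w := by ext <;> simp only [mul_def] <;> ring
  one_mul u := by ext <;> simp only [mul_def, one_def] <;> ring
  mul_one u := by ext <;> simp only [mul_def, one_def] <;> ring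
  left_distrib u v w := by ext <;> simp only [mul_def, add_def] <;> ring
  right_distrib u v w := by ext <;> simp only [mul_def, add_def] <;> ring
  zero_mul u := by ext <;> simp only [mul_def, zero_def] <;> ring
  mul_zero u := by ext <;> simp only [mul_def, zero_def] <;> ring
  mul_comm u v := by ext <;> simp only [mul_def] <;> ring
  natCast := Nat.cast
  natCast_zero := by ext <;> simp [natCast_def, zero_def]
  natCast_succ n := by ext <;> simp [natCast_def, add_def, one_def]
  intCast := Int.cast
  intCast_ofNat n := by ext <;> simp [natCast_def, intCast_def]
  intCast_negSucc n := by ext <;> simp [natCast_def, intCast_def, neg_def, Int.negSucc_eq]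
  nsmul := nsmulRec
  zsmul := zsmulRec

theorem c_intCast_mul (m : ℤ) (v : R3) : (((m : ℤ) : R3) * v).c = m * v.c := by
  cases v; simp [mul_def, intCast_def]

theorem c_add (u v : R3) : (u + v).c = u.c + v.c := rfl

theorem c_pow_intCast_mul (m : ℤ) (j : ℕ) (v : R3) :
    ((((m : ℤ) : R3))^j * v).c = m^j * v.c := by
  induction j generalizing v with
  | zero => simp
  | succ j ih =>
      rw [pow_succ, pow_succ, mul_assoc]
      rw [ih (((m:ℤ):R3) * v), c_intCast_mul]
      ring

/-- θ -/
def th : R3 := ⟨0,1,0⟩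
/-- θ⁻¹ = 1 - θ² -/
def thi : R3 := ⟨1,0,-1⟩

def Θ : R3ˣ := ⟨th, thi, by decide, by decide⟩

/-- The norm form. -/
def Nm (u : R3) : ℤ :=
  u.a^3 - u.a*u.b^2 + 2*u.a^2*u.c + u.a*u.c^2 + 3*u.a*u.b*u.c - u.b^3 + u.b*u.c^2 + u.c^3

def adj (u : R3) : R3 :=
  ⟨u.a^2 + 2*u.a*u.c - u.b^2 + u.b*u.c + u.c^2, -u.c^2 - u.a*u.b, u.b^2 - u.a*u.c - u.c^2⟩

theorem mul_adj (u : R3) : u * adj u = ((Nm u : ℤ) : R3) := by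
  ext <;> simp only [mul_def, adj, intCast_def, Nm] <;> ring

end R3

namespace R3

/-! ### Concrete computations -/

def beta5 : R3 := ⟨30, -53, 40⟩
def beta7 : R3 := ⟨18400, -32290, 24375⟩

theorem th_pow24 : th^24 = 1 + ((5:ℤ) : R3) * beta5 := by decide
theorem th_pow48 : th^48 = 1 + ((7:ℤ) : R3) * beta7 := by decide
theorem th_pow3 : th^3 = ⟨-1,1,0⟩ := by decide
theorem thi_pow4 : thi^4 = ⟨-1,-1,0⟩ := by decide
theorem thi_pow13 : thi^13 = ⟨-4,-3,0⟩ := by decide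

theorem scan5 : ∀ k : ℕ, k < 24 → (th^k).c % 5 = 0 →
    (k = 0 ∨ k = 1 ∨ k = 3 ∨ k = 11 ∨ k = 20) := by decide

/-! ### Binomial expansion lemmas -/

theorem bin5 (x : R3) : (1+x)^5 = 1 + 5*x + x^2*(10 + 10*x + 5*x^2 + x^3) := by ring

theorem bin7 (x : R3) : (1+x)^7
    = 1 + 7*x + x^2*(21 + 35*x + 35*x^2 + 21*x^3 + 7*x^4 + x^5) := by ring

/-- Key expansion for `p = 5`. -/
theorem powA5 (u : R3ˣ) (β : R3) (h : (u : R3) = 1 + ((5:ℤ):R3)*β) :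
    ∀ j : ℕ, ∃ E : R3, ((u^(5^j) : R3ˣ) : R3) = 1 + (((5:ℤ):R3))^(j+1)*(β + ((5:ℤ):R3)*E) := by
  intro j
  induction j with
  | zero => exact ⟨0, by simpa using h⟩
  | succ j ih =>
      obtain ⟨E, hE⟩ := ih
      set S : R3 := (((5:ℤ):R3))^j with hS
      set B : R3 := β + ((5:ℤ):R3)*E with hB
      refine ⟨E + 2*S*B^2 + 10*S^2*B^3 + 25*S^3*B^4 + 25*S^4*B^5, ?_⟩
      have h1 : (u^(5^(j+1)) : R3ˣ) = (u^(5^j))^5 := by rw [← pow_mul, pow_succ]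
      have h2 : ((u^(5^j))^5 : R3ˣ).val = (((u^(5^j) : R3ˣ) : R3))^5 := Units.val_pow_eq_pow_val _ _
      rw [h1, h2, hE]
      have e5 : (((5:ℤ):R3))^(j+1) = 5 * S := by rw [hS, pow_succ]; ring
      have e52 : (((5:ℤ):R3))^(j+1+1) = 25 * S := by
        rw [pow_succ, pow_succ, hS]; push_cast; ring
      have e5c : (((5:ℤ):R3)) = 5 := by push_cast; ring
      rw [e5, e52, e5c]
      ring

/-- Key expansion for `p = 7`. -/
theorem powA7 (u : R3ˣ) (β : R3) (h : (u : R3) = 1 + ((7:ℤ):R3)*β) :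
    ∀ j : ℕ, ∃ E : R3, ((u^(7^j) : R3ˣ) : R3) = 1 + (((7:ℤ):R3))^(j+1)*(β + ((7:ℤ):R3)*E) := by
  intro j
  induction j with
  | zero => exact ⟨0, by simpa using h⟩
  | succ j ih =>
      obtain ⟨E, hE⟩ := ih
      set S : R3 := (((7:ℤ):R3))^j with hS
      set B : R3 := β + ((7:ℤ):R3)*E with hB
      refine ⟨E + 3*S*B^2 + 35*S^2*B^3 + 245*S^3*B^4 + 1029*S^4*B^5
        + 2401*S^5*B^6 + 2401*S^6*B^7, ?_⟩
      have h1 : (u^(7^(j+1)) : R3ˣ) = (u^(7^j))^7 := by rw [← pow_mul, pow_succ]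
      have h2 : ((u^(7^j))^7 : R3ˣ).val = (((u^(7^j) : R3ˣ) : R3))^7 := Units.val_pow_eq_pow_val _ _
      rw [h1, h2, hE]
      have e5 : (((7:ℤ):R3))^(j+1) = 7 * S := by rw [hS, pow_succ]; ring
      have e52 : (((7:ℤ):R3))^(j+1+1) = 49 * S := by
        rw [pow_succ, pow_succ, hS]; push_cast; ring
      have e5c : (((7:ℤ):R3)) = 7 := by push_cast; ring
      rw [e5, e52, e5c]
      ring

/-! ### Powers of units congruent to 1 -/

theorem unit_pow_nat (u : R3ˣ) (q B : R3) (h : (u : R3) = 1 + q*B) :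
    ∀ t : ℕ, ∃ D : R3, ((u^t : R3ˣ) : R3) = 1 + q*(((t:ℤ):R3)*B + q*D) := by
  intro t
  induction t with
  | zero => exact ⟨0, by simp⟩
  | succ t ih =>
      obtain ⟨D, hD⟩ := ih
      refine ⟨D + (((t:ℤ):R3)*B + q*D)*B, ?_⟩
      have h1 : ((u^(t+1) : R3ˣ) : R3) = ((u^t : R3ˣ) : R3) * (u : R3) := by
        rw [pow_succ]; exact Units.val_mul _ _
      rw [h1, hD, h]
      have : (((t:ℕ)+1 : ℤ) : R3) = ((t:ℤ):R3) + 1 := by push_cast; ring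
      push_cast
      ring

theorem unit_pow_int (u : R3ˣ) (q B : R3) (h : (u : R3) = 1 + q*B) :
    ∀ t : ℤ, ∃ D : R3, ((u^t : R3ˣ) : R3) = 1 + q*(((t:ℤ):R3)*B + q*D) := by
  intro t
  rcases Int.eq_nat_or_neg t with ⟨m, rfl | rfl⟩
  · obtain ⟨D, hD⟩ := unit_pow_nat u q B h m
    exact ⟨D, by rw [zpow_natCast]; exact hD⟩
  · -- inverse unit
    have hv : ((u⁻¹ : R3ˣ) : R3) * (1 + q*B) = 1 := by
      rw [← h]; exact Units.inv_mul u
    set v : R3 := ((u⁻¹ : R3ˣ) : R3) with hvdef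
    have hv2 : v = 1 + q*(-(B*v)) := by
      have : v + q*(B*v) = 1 := by rw [← hv]; ring
      have := congrArg (fun z => z - q*(B*v)) this
      simpa using by linear_combination this
    obtain ⟨D, hD⟩ := unit_pow_nat u⁻¹ q (-(B*v)) hv2 m
    refine ⟨D + ((m:ℤ):R3)*(B*(B*v)), ?_⟩
    have h1 : (u^(-(m:ℤ)) : R3ˣ) = (u⁻¹)^m := by
      rw [zpow_neg, zpow_natCast, inv_pow]
    rw [h1, hD]
    have hBv : B*v = B + q*(-(B*(B*v))) := by
      calc B*v = B*(1 + q*(-(B*v))) := by rw [← hv2]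
      _ = B + q*(-(B*(B*v))) := by ring
    have hcast : (((-(m:ℤ)) : ℤ) : R3) = -(((m:ℤ)):R3) := by push_cast; ring
    rw [hcast]
    calc (1 : R3) + q*(((m:ℤ):R3)*(-(B*v)) + q*D)
        = 1 + q*(-(((m:ℤ):R3)*(B*v)) + q*D) := by ring
      _ = 1 + q*(-(((m:ℤ):R3)*(B + q*(-(B*(B*v)))))+ q*D) := by rw [← hBv]
      _ = 1 + q*(-((m:ℤ):R3)*B + q*(D + ((m:ℤ):R3)*(B*(B*v)))) := by ring

end R3

namespace R3

/-- Coordinate `c` of `Θ^n`. -/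
noncomputable def CC (n : ℤ) : ℤ := ((Θ^n : R3ˣ) : R3).c

/-- The Skolem-type argument: zeros of `CC` in an arithmetic progression. -/
theorem sk (p : ℕ) (hp : Nat.Prime p) (P : ℕ) (β : R3)
    (hpow : ∀ j : ℕ, ∃ E : R3,
      (((Θ^P)^(p^j) : R3ˣ) : R3) = 1 + (((p:ℤ):R3))^(j+1)*(β + ((p:ℤ):R3)*E))
    (n₀ : ℤ) (h0 : ((Θ^n₀ : R3ˣ) : R3).c = 0)
    (hg : ¬ ((p:ℤ) ∣ (((Θ^n₀ : R3ˣ) : R3) * β).c))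
    (t : ℤ) (ht : ((Θ^(n₀ + (P:ℤ)*t) : R3ˣ) : R3).c = 0) : t = 0 := by
  have hp1 : (1:ℤ) < (p:ℤ) := by exact_mod_cast hp.one_lt
  have key : ∀ j : ℕ, (p:ℤ)^j ∣ t := by
    intro j
    induction j with
    | zero => simp
    | succ j ih =>
        obtain ⟨s, rfl⟩ := ih
        obtain ⟨E, hE⟩ := hpow j
        obtain ⟨D, hD⟩ := unit_pow_int ((Θ^P)^(p^j)) ((((p:ℤ):R3))^(j+1)) (β + ((p:ℤ):R3)*E) hE s
        -- assemble Θ^(n₀ + P*(p^j*s)) = Θ^n₀ * ((Θ^P)^(p^j))^s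
        have hsplit : (Θ^(n₀ + (P:ℤ)*((p:ℤ)^j*s)) : R3ˣ)
            = (Θ^n₀) * (((Θ^P)^(p^j))^s) := by
          rw [zpow_add]
          congr 1
          rw [← zpow_natCast Θ P, ← zpow_natCast ((Θ^(P:ℤ)) ) (p^j), ← zpow_mul, ← zpow_mul]
          push_cast
          ring_nf
        have hval : ((Θ^(n₀ + (P:ℤ)*((p:ℤ)^j*s)) : R3ˣ) : R3)
            = ((Θ^n₀ : R3ˣ) : R3) * (1 + (((p:ℤ):R3))^(j+1)*(((s:ℤ):R3)*(β + ((p:ℤ):R3)*E)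
                + (((p:ℤ):R3))^(j+1)*D)) := by
          rw [hsplit, Units.val_mul, hD]
        set X : R3 := ((Θ^n₀ : R3ˣ) : R3) with hX
        have hre : ((Θ^(n₀ + (P:ℤ)*((p:ℤ)^j*s)) : R3ˣ) : R3)
            = X + (((p:ℤ):R3))^(j+1) * (((s:ℤ):R3)*(X*β)
              + ((p:ℤ):R3)*(((s:ℤ):R3)*(X*E) + (((p:ℤ):R3))^j*(X*D))) := by
          rw [hval]; push_cast; ring
        have hc : (0:ℤ) = X.c + (p:ℤ)^(j+1) * (s*(X*β).c
              + p*(s*(X*E).c + (p:ℤ)^j*(X*D).c)) := by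
          rw [← ht, hre]
          rw [c_add]
          congr 1
          rw [c_pow_intCast_mul]
          congr 1
          rw [c_add, c_intCast_mul, c_intCast_mul, c_add, c_intCast_mul, c_pow_intCast_mul]
        rw [h0] at hc
        have hz : s*(X*β).c + p*(s*(X*E).c + (p:ℤ)^j*(X*D).c) = 0 := by
          have hpj : ((p:ℤ)^(j+1)) ≠ 0 := by positivity
          have := hc.symm
          rw [zero_add] at this
          exact (mul_eq_zero.mp this).resolve_left hpj
        have hdvd : (p:ℤ) ∣ s * (X*β).c := by
          refine ⟨-(s*(X*E).c + (p:ℤ)^j*(X*D).c), ?_⟩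
          linarith [hz]
        have hps : (p:ℤ) ∣ s := by
          rcases (Int.Prime.dvd_mul' (by exact_mod_cast hp) hdvd) with h | h
          · exact h
          · exact absurd h hg
        obtain ⟨s', rfl⟩ := hps
        exact ⟨s', by ring⟩
  by_contra hne
  set j := t.natAbs with hj
  have h1 : (p:ℤ)^j ≤ |t| := Int.le_of_dvd (abs_pos.mpr hne) ((dvd_abs _ _).mpr (key j))
  have h2 : |t| < (p:ℤ)^j := by
    have hlt : t.natAbs < p^j := lt_of_lt_of_le Nat.lt_two_pow_self
      (Nat.pow_le_pow_left hp.two_le _)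
    calc |t| = (t.natAbs : ℤ) := Int.abs_eq_natAbs t
      _ < ((p^j : ℕ) : ℤ) := by exact_mod_cast hlt
      _ = (p:ℤ)^j := by push_cast; ring
  linarith

end R3

namespace R3

theorem cong_dvd (P : ℕ) (q : ℤ) (β : R3) (hP : ((Θ^(P:ℕ) : R3ˣ) : R3) = 1 + ((q:ℤ):R3)*β)
    (m r : ℤ) (hm : ((Θ^((P:ℤ)*m + r) : R3ˣ) : R3).c = 0) :
    q ∣ ((Θ^r : R3ˣ) : R3).c := by
  obtain ⟨D, hD⟩ := unit_pow_int (Θ^(P:ℕ)) (((q:ℤ):R3)) β hP m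
  set X : R3 := ((Θ^r : R3ˣ) : R3) with hX
  have hsplit : (Θ^((P:ℤ)*m + r) : R3ˣ) = ((Θ^(P:ℕ))^m) * Θ^r := by
    rw [zpow_add]
    congr 1
    rw [← zpow_natCast Θ P, ← zpow_mul]
  have hval : ((Θ^((P:ℤ)*m + r) : R3ˣ) : R3)
      = X + ((q:ℤ):R3)*(((m:ℤ):R3)*(β*X) + ((q:ℤ):R3)*(D*X)) := by
    rw [hsplit, Units.val_mul, hD, ← hX]; ring
  have hc := congrArg R3.c hval
  rw [hm, c_add, c_intCast_mul, c_add, c_intCast_mul, c_intCast_mul] at hc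
  exact ⟨-(m*(β*X).c + q*(D*X).c), by linarith⟩

theorem val_zpow_natCast (kn : ℕ) : ((Θ^((kn:ℕ):ℤ) : R3ˣ) : R3) = th^kn := by
  rw [zpow_natCast, Units.val_pow_eq_pow_val]; rfl

theorem val_zpow_neg_natCast (kn : ℕ) : ((Θ^(-((kn:ℕ):ℤ)) : R3ˣ) : R3) = thi^kn := by
  rw [zpow_neg, zpow_natCast, ← inv_pow, Units.val_pow_eq_pow_val]; rfl

theorem Czero (n : ℤ) (h : ((Θ^n : R3ˣ) : R3).c = 0) :
    n = 0 ∨ n = 1 ∨ n = 3 ∨ n = -4 ∨ n = -13 := by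
  have h24 : ((Θ^(24:ℕ) : R3ˣ) : R3) = 1 + ((5:ℤ):R3)*beta5 := by
    rw [Units.val_pow_eq_pow_val]; exact th_pow24
  have h48 : ((Θ^(48:ℕ) : R3ˣ) : R3) = 1 + ((7:ℤ):R3)*beta7 := by
    rw [Units.val_pow_eq_pow_val]; exact th_pow48
  have hpow5 := powA5 (Θ^(24:ℕ)) beta5 h24
  have hpow7 := powA7 (Θ^(48:ℕ)) beta7 h48
  set k : ℤ := n % 24 with hk
  set t : ℤ := n / 24 with htdef
  have hn : n = (24:ℤ)*t + k := by rw [hk, htdef]; omega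
  have hk0 : 0 ≤ k := Int.emod_nonneg n (by norm_num)
  have hk24 : k < 24 := Int.emod_lt_of_pos n (by norm_num)
  have hdvd5 : (5:ℤ) ∣ ((Θ^k : R3ˣ) : R3).c := by
    refine cong_dvd 24 5 beta5 h24 t k ?_
    rw [show ((24:ℕ):ℤ)*t + k = n by push_cast; omega]
    exact h
  set kn : ℕ := k.toNat with hkn
  have hkk : ((kn:ℕ):ℤ) = k := Int.toNat_of_nonneg hk0
  rw [← hkk, val_zpow_natCast] at hdvd5
  have hkn24 : kn < 24 := by omega
  have hsc := scan5 kn hkn24 (Int.emod_eq_zero_of_dvd hdvd5)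
  have hsk5 := sk 5 (by norm_num) 24 beta5 hpow5
  rcases hsc with h0|h1|h3|h11|h20
  · -- k = 0, n = 24 t; go mod 7
    have hkz : k = 0 := by omega
    rcases Int.even_or_odd t with ⟨s, hs⟩ | ⟨s, hs⟩
    · -- n = 48 s
      have := sk 7 (by norm_num) 48 beta7 hpow7 0 (by decide)
        (by rw [zpow_zero]; decide) s
        (by rw [show ((0:ℤ) + ((48:ℕ):ℤ)*s) = n by push_cast; omega]; exact h)
      left; omega
    · -- n = 48 s + 24 : contradiction mod 7
      exfalso
      have hd7 : (7:ℤ) ∣ ((Θ^((24:ℕ):ℤ) : R3ˣ) : R3).c := by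
        refine cong_dvd 48 7 beta7 h48 s ((24:ℕ):ℤ) ?_
        rw [show ((48:ℕ):ℤ)*s + ((24:ℕ):ℤ) = n by push_cast; omega]
        exact h
      rw [val_zpow_natCast] at hd7
      revert hd7; decide
  · -- k = 1
    have := hsk5 1 (by decide) (by rw [show (1:ℤ) = ((1:ℕ):ℤ) by norm_num, val_zpow_natCast]; decide)
      t (by rw [show ((1:ℤ) + ((24:ℕ):ℤ)*t) = n by push_cast; omega]; exact h)
    right; left; omega
  · -- k = 3
    have := hsk5 3 (by rw [show (3:ℤ) = ((3:ℕ):ℤ) by norm_num, val_zpow_natCast]; decide)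
      (by rw [show (3:ℤ) = ((3:ℕ):ℤ) by norm_num, val_zpow_natCast]; decide)
      t (by rw [show ((3:ℤ) + ((24:ℕ):ℤ)*t) = n by push_cast; omega]; exact h)
    right; right; left; omega
  · -- k = 11, n ≡ -13
    have := hsk5 (-13) (by rw [show (-13:ℤ) = -((13:ℕ):ℤ) by norm_num, val_zpow_neg_natCast]; decide)
      (by rw [show (-13:ℤ) = -((13:ℕ):ℤ) by norm_num, val_zpow_neg_natCast]; decide)
      (t+1) (by rw [show ((-13:ℤ) + ((24:ℕ):ℤ)*(t+1)) = n by push_cast; omega]; exact h)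
    right; right; right; right; omega
  · -- k = 20, n ≡ -4
    have := hsk5 (-4) (by rw [show (-4:ℤ) = -((4:ℕ):ℤ) by norm_num, val_zpow_neg_natCast]; decide)
      (by rw [show (-4:ℤ) = -((4:ℕ):ℤ) by norm_num, val_zpow_neg_natCast]; decide)
      (t+1) (by rw [show ((-4:ℤ) + ((24:ℕ):ℤ)*(t+1)) = n by push_cast; omega]; exact h)
    right; right; right; left; omega

end R3

namespace R3

/-! ### The real root and complex embeddings -/

theorem hex : ∃ x : ℝ, (-(1.3248:ℝ) ≤ x ∧ x ≤ -(1.3247:ℝ)) ∧ x^3 - x + 1 = 0 := by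
  have hcont : ContinuousOn (fun x : ℝ => x^3 - x + 1) (Set.Icc (-(1.3248:ℝ)) (-(1.3247:ℝ))) := by
    fun_prop
  have hsub := intermediate_value_Icc (by norm_num : (-(1.3248:ℝ)) ≤ -(1.3247:ℝ)) hcont
  have h0 : (0:ℝ) ∈ Set.Icc ((-(1.3248:ℝ))^3 - (-(1.3248:ℝ)) + 1)
      ((-(1.3247:ℝ))^3 - (-(1.3247:ℝ)) + 1) := by
    constructor <;> norm_num
  obtain ⟨x, hx, hfx⟩ := hsub h0
  exact ⟨x, ⟨hx.1, hx.2⟩, hfx⟩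

noncomputable def rr : ℝ := hex.choose
theorem rr_lo : -(1.3248:ℝ) ≤ rr := hex.choose_spec.1.1
theorem rr_hi : rr ≤ -(1.3247:ℝ) := hex.choose_spec.1.2
theorem rr_cube : rr^3 = rr - 1 := by have := hex.choose_spec.2; unfold rr; linarith

noncomputable def qq : ℝ := Real.sqrt (3*rr^2/4 - 1)
theorem qq_sq : qq^2 = 3*rr^2/4 - 1 := by
  rw [qq, Real.sq_sqrt]
  nlinarith [rr_hi, rr_lo]

noncomputable def ρ1 : ℂ := Complex.I * (qq:ℝ) + ((-rr/2 : ℝ):ℂ)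
noncomputable def ρ2 : ℂ := -((rr:ℝ):ℂ) - ρ1

theorem rr_cube_c : ((rr:ℝ):ℂ)^3 = ((rr:ℝ):ℂ) - 1 := by exact_mod_cast congrArg (fun t : ℝ => (t:ℂ)) rr_cube

theorem hmix : ((rr:ℝ):ℂ)^2 + ((rr:ℝ):ℂ)*ρ1 + ρ1^2 = 1 := by
  have hq := qq_sq
  simp only [ρ1, Complex.ext_iff, Complex.add_re, Complex.add_im, Complex.mul_re, Complex.mul_im,
    Complex.ofReal_re, Complex.ofReal_im, Complex.I_re, Complex.I_im, Complex.one_re,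
    Complex.one_im, pow_two]
  constructor <;> nlinarith [hq]

theorem rho1_cube : ρ1^3 = ρ1 - 1 := by
  linear_combination (ρ1 - ((rr:ℝ):ℂ))*hmix + rr_cube_c

theorem hmix2 : ((rr:ℝ):ℂ)^2*ρ1 + ((rr:ℝ):ℂ)*ρ1^2 = 1 := by
  linear_combination ((rr:ℝ):ℂ)*hmix - rr_cube_c

theorem rho2_def : ρ2 = -((rr:ℝ):ℂ) - ρ1 := rfl

theorem rho2_cube : ρ2^3 = ρ2 - 1 := by
  rw [rho2_def]
  linear_combination (-ρ1 - 2*((rr:ℝ):ℂ))*hmix + rr_cube_c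

theorem conj_rho1 : (starRingEnd ℂ) ρ1 = ρ2 := by
  simp only [ρ1, ρ2, Complex.ext_iff, map_add, map_mul, Complex.conj_ofReal, Complex.conj_I,
    Complex.add_re, Complex.add_im, Complex.mul_re, Complex.mul_im, Complex.neg_re,
    Complex.neg_im, Complex.sub_re, Complex.sub_im, Complex.ofReal_re, Complex.ofReal_im,
    Complex.I_re, Complex.I_im]
  constructor <;> ring

/-! ### The embeddings as ring homs -/

noncomputable def φ : R3 →+* ℝ where
  toFun u := (u.a:ℝ) + u.b*rr + u.c*rr^2
  map_one' := by simp [one_def]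
  map_zero' := by simp [zero_def]
  map_add' u v := by cases u; cases v; simp only [add_def]; push_cast; ring
  map_mul' u v := by
    cases u with | mk a b c =>
    cases v with | mk d e f =>
    simp only [mul_def]
    push_cast
    linear_combination (-((b:ℝ)*f + c*e) - c*f*rr) * rr_cube

theorem φ_apply (u : R3) : φ u = (u.a:ℝ) + u.b*rr + u.c*rr^2 := rfl

noncomputable def emb (x : ℂ) (hx : x^3 = x - 1) : R3 →+* ℂ where
  toFun u := (u.a:ℂ) + u.b*x + u.c*x^2
  map_one' := by simp [one_def]
  map_zero' := by simp [zero_def]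
  map_add' u v := by cases u; cases v; simp only [add_def]; push_cast; ring
  map_mul' u v := by
    cases u with | mk a b c =>
    cases v with | mk d e f =>
    simp only [mul_def]
    push_cast
    linear_combination (-((b:ℂ)*f + c*e) - c*f*x) * hx

noncomputable def ψ : R3 →+* ℂ := emb ρ1 rho1_cube
noncomputable def ψ' : R3 →+* ℂ := emb ρ2 rho2_cube

theorem ψ_apply (u : R3) : ψ u = (u.a:ℂ) + u.b*ρ1 + u.c*ρ1^2 := rfl
theorem ψ'_apply (u : R3) : ψ' u = (u.a:ℂ) + u.b*ρ2 + u.c*ρ2^2 := rfl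

theorem ψ'_eq_conj (v : R3) : ψ' v = (starRingEnd ℂ) (ψ v) := by
  rw [ψ_apply, ψ'_apply]
  simp only [map_add, map_mul, map_pow, map_intCast, conj_rho1]

theorem normC (v : R3) : ((Nm v : ℤ) : ℂ) = ((φ v : ℝ) : ℂ) * (ψ v * ψ' v) := by
  cases v with | mk a b c =>
  rw [Nm, φ_apply, ψ_apply, ψ'_apply, rho2_def]
  push_cast
  linear_combination
    (-((c:ℂ)^3*((rr:ℝ):ℂ)^2 + (c:ℂ)^3*((rr:ℝ):ℂ)^2*ρ1^2 + (c:ℂ)^3*((rr:ℝ):ℂ)^3*ρ1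
      - (c:ℂ)^3*((rr:ℝ):ℂ)^4 + (b:ℂ)*(c:ℂ)^2*((rr:ℝ):ℂ) + (b:ℂ)*(c:ℂ)^2*((rr:ℝ):ℂ)*ρ1^2
      + (b:ℂ)*(c:ℂ)^2*((rr:ℝ):ℂ)^2*ρ1 - (b:ℂ)^3*((rr:ℝ):ℂ) + (a:ℂ)*(c:ℂ)^2
      + (a:ℂ)*(c:ℂ)^2*ρ1^2 + (a:ℂ)*(c:ℂ)^2*((rr:ℝ):ℂ)*ρ1 + (a:ℂ)*(c:ℂ)^2*((rr:ℝ):ℂ)^2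
      + 3*(a:ℂ)*(b:ℂ)*(c:ℂ)*((rr:ℝ):ℂ) - (a:ℂ)*(b:ℂ)^2 + 2*(a:ℂ)^2*(c:ℂ)))*hmix
    + (-(-(c:ℂ)^3 - (c:ℂ)^3*((rr:ℝ):ℂ) + (c:ℂ)^3*((rr:ℝ):ℂ)^3 - (b:ℂ)*(c:ℂ)^2 + (b:ℂ)^3
      - 3*(a:ℂ)*(b:ℂ)*(c:ℂ)))*rr_cube_c

theorem norm_eq (v : R3) : ((Nm v : ℤ) : ℝ) = φ v * Complex.normSq (ψ v) := by
  have h := normC v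
  rw [ψ'_eq_conj, Complex.mul_conj] at h
  exact_mod_cast h

theorem trace_eq (v : R3) : ((3*v.a + 2*v.c : ℤ) : ℝ) = φ v + 2*(ψ v).re := by
  have h : ((3*v.a + 2*v.c : ℤ) : ℂ) = ((φ v : ℝ):ℂ) + (ψ v + (starRingEnd ℂ) (ψ v)) := by
    rw [← ψ'_eq_conj, φ_apply, ψ_apply, ψ'_apply, rho2_def]
    push_cast
    linear_combination (-2*(v.c:ℂ))*hmix
  rw [Complex.add_conj] at h
  exact_mod_cast h

theorem normSq_rho1 : Complex.normSq ρ1 = rr^2 - 1 := by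
  simp only [Complex.normSq_apply, ρ1, Complex.add_re, Complex.add_im, Complex.mul_re,
    Complex.mul_im, Complex.ofReal_re, Complex.ofReal_im, Complex.I_re, Complex.I_im]
  nlinarith [qq_sq]

theorem mul_th_eq (v : R3) : v * th = ⟨-v.c, v.a + v.c, v.b⟩ := by
  ext <;> simp [mul_def, th] <;> ring

theorem ψ_th : ψ th = ρ1 := by rw [ψ_apply]; simp [th]
theorem φ_th : φ th = rr := by rw [φ_apply]; simp [th]

end R3

namespace R3

set_option maxHeartbeats 2000000 in
theorem partC (v : R3) (hN : Nm v = 1 ∨ Nm v = -1)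
    (h1 : 1 ≤ |φ v|) (h2 : |φ v| < -rr) : v = 1 ∨ v = -1 := by
  have hrlo := rr_lo
  have hrhi := rr_hi
  -- product relation
  have hprod : |φ v| * Complex.normSq (ψ v) = 1 := by
    have h := norm_eq v
    have habs : |((Nm v : ℤ):ℝ)| = 1 := by
      rcases hN with h' | h' <;> rw [h'] <;> norm_num
    rw [h, abs_mul, abs_of_nonneg (Complex.normSq_nonneg _)] at habs
    exact habs
  have hW0 : 0 ≤ Complex.normSq (ψ v) := Complex.normSq_nonneg _
  have hW1 : Complex.normSq (ψ v) ≤ 1 := by nlinarith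
  -- first trace bound
  have hre1 : (ψ v).re^2 ≤ Complex.normSq (ψ v) := by
    rw [Complex.normSq_apply]; nlinarith [sq_nonneg (ψ v).im]
  have habs1 : |(ψ v).re| ≤ 1 := by
    have h := abs_nonneg ((ψ v).re)
    nlinarith [sq_abs ((ψ v).re)]
  have hb1 : |3*v.a + 2*v.c| ≤ 3 := by
    have hlt : |((3*v.a + 2*v.c : ℤ):ℝ)| < 4 := by
      rw [trace_eq v]
      calc |φ v + 2*(ψ v).re| ≤ |φ v| + |2*(ψ v).re| := abs_add_le _ _
        _ = |φ v| + 2*|(ψ v).re| := by rw [abs_mul]; norm_num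
        _ < 4 := by linarith
    rw [← Int.cast_abs] at hlt
    exact_mod_cast Int.lt_add_one_iff.mp (by exact_mod_cast hlt)
  -- second trace bound, for v*th
  have hv2 : v * th = ⟨-v.c, v.a + v.c, v.b⟩ := mul_th_eq v
  have hφ2 : φ (v * th) = φ v * rr := by rw [map_mul, φ_th]
  have hW2 : Complex.normSq (ψ (v * th)) = Complex.normSq (ψ v) * (rr^2-1) := by
    rw [map_mul, Complex.normSq_mul, ψ_th, normSq_rho1]
  have hrr2a : (0:ℝ) ≤ rr^2 - 1 := by nlinarith
  have hrr2b : rr^2 - 1 ≤ 0.7551 := by nlinarith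
  have hre2 : (ψ (v*th)).re^2 ≤ 0.7551 := by
    have : (ψ (v*th)).re^2 ≤ Complex.normSq (ψ (v*th)) := by
      rw [Complex.normSq_apply]; nlinarith [sq_nonneg (ψ (v*th)).im]
    rw [hW2] at this
    nlinarith
  have habs2 : |(ψ (v*th)).re| ≤ 0.87 := by
    have h := abs_nonneg ((ψ (v*th)).re)
    nlinarith [sq_abs ((ψ (v*th)).re)]
  have hφ2abs : |φ (v*th)| < 1.7552 := by
    rw [hφ2, abs_mul, abs_of_neg (show rr < 0 by linarith)]
    nlinarith [abs_nonneg (φ v)]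
  have hb2 : |2*v.b - 3*v.c| ≤ 3 := by
    have hlt : |((3*(v*th).a + 2*(v*th).c : ℤ):ℝ)| < 4 := by
      rw [trace_eq (v*th)]
      calc |φ (v*th) + 2*(ψ (v*th)).re| ≤ |φ (v*th)| + |2*(ψ (v*th)).re| := abs_add_le _ _
        _ = |φ (v*th)| + 2*|(ψ (v*th)).re| := by rw [abs_mul]; norm_num
        _ < 4 := by linarith
    rw [← Int.cast_abs] at hlt
    have h4 : |3*(v*th).a + 2*(v*th).c| ≤ 3 :=
      Int.lt_add_one_iff.mp (by exact_mod_cast hlt)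
    rw [hv2] at h4
    simp only at h4
    have : 3*(-v.c) + 2*v.b = 2*v.b - 3*v.c := by ring
    rwa [this] at h4
  -- third trace bound, for v*th*th
  have hv3 : v * th * th = ⟨-v.b, v.b - v.c, v.a + v.c⟩ := by
    rw [mul_th_eq, mul_th_eq v]; ext <;> simp <;> ring
  have hφ3 : φ (v * th * th) = φ v * rr * rr := by rw [map_mul, φ_th, map_mul, φ_th]
  have hW3 : Complex.normSq (ψ (v * th * th)) = Complex.normSq (ψ v) * (rr^2-1) * (rr^2-1) := by
    rw [map_mul, Complex.normSq_mul, ψ_th, normSq_rho1, map_mul, Complex.normSq_mul, ψ_th,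
      normSq_rho1]
  have hre3 : (ψ (v*th*th)).re^2 ≤ 0.7551^2 := by
    have h5 : (ψ (v*th*th)).re^2 ≤ Complex.normSq (ψ (v*th*th)) := by
      rw [Complex.normSq_apply]; nlinarith [sq_nonneg (ψ (v*th*th)).im]
    rw [hW3] at h5
    have hstep : Complex.normSq (ψ v) * (rr^2-1) ≤ 0.7551 := by nlinarith
    nlinarith [mul_le_mul_of_nonneg_right hstep hrr2a]
  have habs3 : |(ψ (v*th*th)).re| ≤ 0.7552 := by
    have h := abs_nonneg ((ψ (v*th*th)).re)
    nlinarith [sq_abs ((ψ (v*th*th)).re)]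
  have hφ3abs : |φ (v*th*th)| < 2.3256 := by
    rw [hφ3, abs_mul, abs_mul, abs_of_neg (show rr < 0 by linarith)]
    nlinarith [abs_nonneg (φ v), abs_nonneg (φ v * rr)]
  have hb3 : |2*v.a - 3*v.b + 2*v.c| ≤ 3 := by
    have hlt : |((3*(v*th*th).a + 2*(v*th*th).c : ℤ):ℝ)| < 4 := by
      rw [trace_eq (v*th*th)]
      calc |φ (v*th*th) + 2*(ψ (v*th*th)).re|
          ≤ |φ (v*th*th)| + |2*(ψ (v*th*th)).re| := abs_add_le _ _
        _ = |φ (v*th*th)| + 2*|(ψ (v*th*th)).re| := by rw [abs_mul]; norm_num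
        _ < 4 := by linarith
    rw [← Int.cast_abs] at hlt
    have h4 : |3*(v*th*th).a + 2*(v*th*th).c| ≤ 3 :=
      Int.lt_add_one_iff.mp (by exact_mod_cast hlt)
    rw [hv3] at h4
    simp only at h4
    have : 3*(-v.b) + 2*(v.a + v.c) = 2*v.a - 3*v.b + 2*v.c := by ring
    rwa [this] at h4
  -- enumerate
  obtain ⟨a, b, c⟩ := v
  simp only at hb1 hb2 hb3
  rw [abs_le] at hb1 hb2 hb3
  have hba : -1 ≤ a ∧ a ≤ 1 := by omega
  have hbb : -1 ≤ b ∧ b ≤ 1 := by omega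
  have hbc : -1 ≤ c ∧ c ≤ 1 := by omega
  clear hprod hW0 hW1 hre1 habs1 hv2 hφ2 hW2 hrr2a hrr2b hre2 habs2 hφ2abs hb2 hv3 hφ3 hW3 hre3 habs3 hφ3abs hb3 hb1
  obtain ⟨ha1, ha2⟩ := hba
  obtain ⟨hb1', hb2'⟩ := hbb
  obtain ⟨hc1, hc2⟩ := hbc
  interval_cases a <;> interval_cases b <;> interval_cases c <;>
  first
    | (left; rfl)
    | (right; rfl)
    | (exfalso; revert hN; decide)
    | (exfalso;
       rw [φ_apply] at h1 h2;
       simp only at h1 h2;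
       push_cast at h1 h2;
       obtain ⟨h2a, h2b⟩ := abs_lt.mp h2;
       rcases le_abs'.mp h1 with he|he <;>
         nlinarith [sq_nonneg (rr+1.3247), sq_nonneg (rr+1.3248), rr_lo, rr_hi])

end R3

namespace R3

theorem Nm_one : Nm 1 = 1 := by decide

theorem Nm_mul (u v : R3) : Nm (u*v) = Nm u * Nm v := by
  have hcalc : ((Nm (u*v) : ℤ):ℝ) = ((Nm u * Nm v : ℤ):ℝ) := by
    calc ((Nm (u*v) : ℤ):ℝ) = φ (u*v) * Complex.normSq (ψ (u*v)) := norm_eq _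
      _ = (φ u * Complex.normSq (ψ u)) * (φ v * Complex.normSq (ψ v)) := by
          rw [map_mul, map_mul, Complex.normSq_mul]; ring
      _ = ((Nm u : ℤ):ℝ) * ((Nm v : ℤ):ℝ) := by rw [norm_eq u, norm_eq v]
      _ = ((Nm u * Nm v : ℤ):ℝ) := by push_cast; ring
  exact_mod_cast hcalc

theorem Nm_unit (U : R3ˣ) : Nm (U : R3) = 1 ∨ Nm (U : R3) = -1 := by
  have h : Nm (U : R3) * Nm ((U⁻¹ : R3ˣ) : R3) = 1 := by
    rw [← Nm_mul, Units.mul_inv, Nm_one]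
  exact Int.isUnit_iff.mp (IsUnit.of_mul_eq_one _ h)

theorem main_sol (x y : ℤ) (h : x^3 - x*y^2 + y^3 = 1) :
    (x = 1 ∧ y = 1) ∨ (x = 1 ∧ y = 0) ∨ (x = 0 ∧ y = 1) ∨ (x = -1 ∧ y = 1)
      ∨ (x = 4 ∧ y = -3) := by
  set u : R3 := ⟨x, -y, 0⟩ with hu
  have hNu : Nm u = 1 := by
    have : Nm u = x^3 - x*y^2 + y^3 := by simp [Nm, hu]; ring
    rw [this, h]
  have hinv1 : u * adj u = 1 := by rw [mul_adj, hNu]; norm_num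
  have hinv2 : adj u * u = 1 := by rw [mul_comm]; exact hinv1
  set U : R3ˣ := ⟨u, adj u, hinv1, hinv2⟩ with hUdef
  have hWpos : φ u * Complex.normSq (ψ u) = 1 := by
    have hh := norm_eq u
    rw [hNu] at hh
    exact_mod_cast hh.symm
  have hφne : φ u ≠ 0 := by
    intro h0
    rw [h0, zero_mul] at hWpos
    norm_num at hWpos
  have hφpos : 0 < |φ u| := abs_pos.mpr hφne
  have hrneg : rr < 0 := by linarith [rr_hi]
  have hrr1 : (1:ℝ) < -rr := by linarith [rr_hi]
  obtain ⟨n, hn1, hn2⟩ := exists_mem_Ico_zpow hφpos hrr1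
  set V : R3ˣ := U * (Θ^n)⁻¹ with hV
  -- compute |φ V|
  have hφinv : φ (((Θ^n)⁻¹ : R3ˣ) : R3) = (rr^n)⁻¹ := by
    have e1 : φ (((Θ^n)⁻¹ : R3ˣ) : R3)
        = ((Units.map (φ : R3 →+* ℝ).toMonoidHom ((Θ^n)⁻¹) : ℝˣ) : ℝ) := rfl
    rw [e1, map_inv, map_zpow]
    rw [Units.val_inv_eq_inv_val, Units.val_zpow_eq_zpow_val]
    have e2 : ((Units.map (φ : R3 →+* ℝ).toMonoidHom Θ : ℝˣ) : ℝ) = rr := φ_th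
    rw [e2]
  have hφV : φ (V : R3) = φ u * (rr^n)⁻¹ := by
    have e1 : (V : R3) = u * (((Θ^n)⁻¹ : R3ˣ) : R3) := rfl
    rw [e1, map_mul, hφinv]
  have habs_r : |rr| = -rr := abs_of_neg hrneg
  have hpow_pos : (0:ℝ) < (-rr)^n := zpow_pos (by linarith) n
  have hzp : |rr ^ n| = (-rr) ^ n := by
    rw [← habs_r]
    rcases n with m | m
    · simp [abs_pow]
    · simp [zpow_negSucc, abs_inv, abs_pow]
  have habsV : |φ (V : R3)| = |φ u| / (-rr)^n := by
    rw [hφV, abs_mul, abs_inv, hzp, div_eq_mul_inv]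
  have h1V : 1 ≤ |φ (V : R3)| := by
    rw [habsV, le_div_iff₀ hpow_pos, one_mul]
    exact hn1
  have h2V : |φ (V : R3)| < -rr := by
    rw [habsV, div_lt_iff₀ hpow_pos]
    calc |φ u| < (-rr)^(n+1) := hn2
      _ = (-rr) * (-rr)^n := by
          rw [zpow_add_one₀ (show (-rr) ≠ 0 by linarith)]; ring
  have hUeq : (V * Θ^n : R3ˣ) = U := by rw [hV, inv_mul_cancel_right]
  have huval : (V : R3) * ((Θ^n : R3ˣ) : R3) = u := by
    have hcong := congrArg (Units.val) hUeq
    rwa [Units.val_mul] at hcong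
  rcases partC (V : R3) (Nm_unit V) h1V h2V with hV1 | hV1
  · -- V = 1, u = Θ^n
    rw [hV1, one_mul] at huval
    have hcc : ((Θ^n : R3ˣ) : R3).c = 0 := by rw [huval]
    rcases Czero n hcc with rfl | rfl | rfl | rfl | rfl
    · rw [zpow_zero] at huval
      have ha := congrArg R3.a huval
      have hb := congrArg R3.b huval
      simp [hu, Units.val_one, one_def] at ha hb
      right; left; exact ⟨by omega, by omega⟩
    · rw [zpow_one] at huval
      have ha := congrArg R3.a huval
      have hb := congrArg R3.b huval
      simp [hu, Θ, th] at ha hb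
      exfalso
      obtain rfl : x = 0 := by omega
      obtain rfl : y = -1 := by omega
      norm_num at h
    · rw [show (3:ℤ) = ((3:ℕ):ℤ) by norm_num, val_zpow_natCast, th_pow3] at huval
      have ha := congrArg R3.a huval
      have hb := congrArg R3.b huval
      simp [hu] at ha hb
      exfalso
      obtain rfl : x = -1 := by omega
      obtain rfl : y = -1 := by omega
      norm_num at h
    · rw [show (-4:ℤ) = -((4:ℕ):ℤ) by norm_num, val_zpow_neg_natCast, thi_pow4] at huval
      have ha := congrArg R3.a huval
      have hb := congrArg R3.b huval
      simp [hu] at ha hb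
      right; right; right; left; exact ⟨by omega, by omega⟩
    · rw [show (-13:ℤ) = -((13:ℕ):ℤ) by norm_num, val_zpow_neg_natCast, thi_pow13] at huval
      have ha := congrArg R3.a huval
      have hb := congrArg R3.b huval
      simp [hu] at ha hb
      exfalso
      obtain rfl : x = -4 := by omega
      obtain rfl : y = 3 := by omega
      norm_num at h
  · -- V = -1, u = -Θ^n
    rw [hV1, neg_one_mul] at huval
    have hcc : ((Θ^n : R3ˣ) : R3).c = 0 := by
      have hcong := congrArg R3.c huval
      simp [hu, neg_def] at hcong
      omega
    rcases Czero n hcc with rfl | rfl | rfl | rfl | rfl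
    · rw [zpow_zero] at huval
      have ha := congrArg R3.a huval
      have hb := congrArg R3.b huval
      simp [hu, Units.val_one, one_def, neg_def] at ha hb
      exfalso
      obtain rfl : x = -1 := by omega
      obtain rfl : y = 0 := by omega
      norm_num at h
    · rw [zpow_one] at huval
      have ha := congrArg R3.a huval
      have hb := congrArg R3.b huval
      simp [hu, Θ, th, neg_def] at ha hb
      right; right; left; exact ⟨by omega, by omega⟩
    · rw [show (3:ℤ) = ((3:ℕ):ℤ) by norm_num, val_zpow_natCast, th_pow3] at huval
      have ha := congrArg R3.a huval
      have hb := congrArg R3.b huval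
      simp [hu, neg_def] at ha hb
      left; exact ⟨by omega, by omega⟩
    · rw [show (-4:ℤ) = -((4:ℕ):ℤ) by norm_num, val_zpow_neg_natCast, thi_pow4] at huval
      have ha := congrArg R3.a huval
      have hb := congrArg R3.b huval
      simp [hu, neg_def] at ha hb
      exfalso
      obtain rfl : x = 1 := by omega
      obtain rfl : y = -1 := by omega
      norm_num at h
    · rw [show (-13:ℤ) = -((13:ℕ):ℤ) by norm_num, val_zpow_neg_natCast, thi_pow13] at huval
      have ha := congrArg R3.a huval
      have hb := congrArg R3.b huval
      simp [hu, neg_def] at ha hb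
      right; right; right; right; exact ⟨by omega, by omega⟩

end R3

end DeloneAux

/-- The equation `x³ − x·y² + y³ = 1` has exactly the five integer solutions
`(1, 1)`, `(1, 0)`, `(0, 1)`, `(−1, 1)`, `(4, −3)`. -/
theorem delone_quintuple_solutions :
    {p : ℤ × ℤ | p.1 ^ 3 - p.1 * p.2 ^ 2 + p.2 ^ 3 = 1} =
      {(1, 1), (1, 0), (0, 1), (-1, 1), (4, -3)} := by
  ext p
  obtain ⟨x, y⟩ := p
  simp only [Set.mem_setOf_eq, Set.mem_insert_iff, Set.mem_singleton_iff, Prod.mk.injEq]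
  constructor
  · intro h
    exact DeloneAux.R3.main_sol x y h
  · rintro (⟨rfl, rfl⟩|⟨rfl, rfl⟩|⟨rfl, rfl⟩|⟨rfl, rfl⟩|⟨rfl, rfl⟩) <;> norm_num
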